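/- arXiv:2203.00900 — 3 statements merged into one kernel-verified Lean document; each statement's English description precedes it below -/
import Mathlib

section
/- Let M ≥ 1 be a natural number, let ε be a real number that is not an integer, and let x : Fin M → ℂ be arbitrary frequency-domain symbols. Define the time-domain samples x̃(n) = (1/M) ∑_{m=0}^{M-1} x(m)·exp(2πi·m·n/M) for n = 0,…,M−1, the frequency-offset received samples ỹ(n) = x̃(n)·exp(2πi·n·ε/M), and the DFT outputs y(s) = ∑_{n=0}^{M-1} ỹ(n)·exp(−2πi·n·s/M) for s = 0,…,M−1. Then for every s, y(s) = ∑_{m=0}^{M-1} I(m − s + ε)·x(m), where I(u) = (sin(πu) / (M·sin(πu/M))) · exp(iπ(1 − 1/M)·u). -/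
lemma exp_two_sub_one (t : ℂ) :
    Complex.exp (2 * t * Complex.I) - 1
      = Complex.exp (t * Complex.I) * (2 * Complex.I * Complex.sin t) := by
  rw [Complex.sin]
  have h1 : Complex.exp (2 * t * Complex.I)
      = Complex.exp (t * Complex.I) * Complex.exp (t * Complex.I) := by
    rw [← Complex.exp_add]; ring_nf
  have h2 : Complex.exp (t * Complex.I) * Complex.exp (-t * Complex.I) = 1 := by
    rw [← Complex.exp_add]; simp
  have hI : Complex.I * Complex.I = -1 := Complex.I_mul_I
  linear_combination h1 + h2 - Complex.exp (t*Complex.I) *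
    (Complex.exp (-t*Complex.I) - Complex.exp (t*Complex.I)) * hI

set_option maxHeartbeats 1000000 in
lemma key_sum (M : ℕ) (hM : 1 ≤ M) (u : ℝ) (hu : ∀ k : ℤ, u ≠ (k : ℝ)) :
    (1 / (M : ℂ)) * ∑ n ∈ Finset.range M,
        (Complex.exp (2 * (Real.pi : ℂ) * Complex.I * (u : ℂ) / (M : ℂ)))^n
      = ((Real.sin (Real.pi * u) / ((M : ℝ) * Real.sin (Real.pi * u / (M : ℝ)))) : ℂ)
          * Complex.exp (Complex.I * (Real.pi : ℂ) * (1 - 1 / (M : ℂ)) * (u : ℂ)) := by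
  have hM0 : (M : ℝ) ≠ 0 := by positivity
  have hMc : (M : ℂ) ≠ 0 := by exact_mod_cast hM0
  set a : ℂ := (Real.pi : ℂ) * (u : ℂ) with ha
  set b : ℂ := (Real.pi : ℂ) * (u : ℂ) / (M : ℂ) with hb
  have hsaR : ((Real.sin (Real.pi * u) : ℝ) : ℂ) = Complex.sin a := by
    rw [Complex.ofReal_sin]; push_cast; rfl
  have hsbR : ((Real.sin (Real.pi * u / (M : ℝ)) : ℝ) : ℂ) = Complex.sin b := by
    rw [Complex.ofReal_sin]; push_cast; rfl
  have hsb : Real.sin (Real.pi * u / (M : ℝ)) ≠ 0 := by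
    intro h
    rw [Real.sin_eq_zero_iff] at h
    obtain ⟨n, hn⟩ := h
    have h2 : Real.pi * ((n:ℝ) * M) = Real.pi * u := by
      field_simp at hn; rw [hn]
    have h3 := mul_left_cancel₀ Real.pi_ne_zero h2
    exact hu (n * M) (by push_cast; linarith)
  have hsinb : Complex.sin b ≠ 0 := by rw [← hsbR]; exact_mod_cast hsb
  have hc : (2 * (Real.pi:ℂ) * Complex.I) ≠ 0 := by
    have : (Real.pi : ℂ) ≠ 0 := by exact_mod_cast Real.pi_ne_zero
    simp [this, Complex.I_ne_zero]
  have hq : Complex.exp (2 * (Real.pi : ℂ) * Complex.I * (u : ℂ) / (M : ℂ)) ≠ 1 := by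
    intro h
    rw [Complex.exp_eq_one_iff] at h
    obtain ⟨n, hn⟩ := h
    have h2 : (2 * (Real.pi:ℂ) * Complex.I) * (u:ℂ)
        = (2 * (Real.pi:ℂ) * Complex.I) * ((n:ℂ) * M) := by
      field_simp at hn; linear_combination (2 * (Real.pi:ℂ) * Complex.I) * hn
    have h3 : (u:ℂ) = (n:ℂ) * M := mul_left_cancel₀ hc h2
    exact hu (n * M) (by exact_mod_cast h3)
  rw [geom_sum_eq hq]
  have hqM : (Complex.exp (2 * (Real.pi : ℂ) * Complex.I * (u : ℂ) / (M : ℂ)))^M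
      = Complex.exp (2 * a * Complex.I) := by
    rw [← Complex.exp_nat_mul]; congr 1; rw [ha]; field_simp
  have hq1 : Complex.exp (2 * (Real.pi : ℂ) * Complex.I * (u : ℂ) / (M : ℂ))
      = Complex.exp (2 * b * Complex.I) := by
    congr 1; rw [hb]; ring
  rw [hqM, hq1, exp_two_sub_one, exp_two_sub_one, hsaR, hsbR, Complex.ofReal_natCast]
  have hexp : Complex.exp (b * Complex.I)
      * Complex.exp (Complex.I * (Real.pi:ℂ) * (1 - 1/(M:ℂ)) * (u:ℂ))
      = Complex.exp (a * Complex.I) := by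
    rw [← Complex.exp_add]; congr 1; rw [ha, hb]; field_simp; ring
  generalize hE1 : Complex.exp (a * Complex.I) = E1 at hexp ⊢
  generalize hE2 : Complex.exp (b * Complex.I) = E2 at hexp ⊢
  generalize hE3 : Complex.exp (Complex.I * (Real.pi:ℂ) * (1 - 1/(M:ℂ)) * (u:ℂ)) = E3 at hexp ⊢
  have he2 : E2 ≠ 0 := hE2 ▸ Complex.exp_ne_zero _
  have hI : Complex.I ≠ 0 := Complex.I_ne_zero
  field_simp [hMc, he2, hsinb, hI]
  linear_combination (-(Complex.sin a)) * hexp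

set_option maxHeartbeats 1000000 in
/-- **Lemma 1 of the paper, deterministic content.**
An OFDM symbol transmitted with a normalized Doppler frequency offset `ε` (not an integer)
produces, after the DFT, the inter-carrier interference kernel
`I(u) = (sin(πu) / (M sin(πu/M))) · exp(iπ(1 − 1/M) u)`:
for every output subcarrier `s`, `y(s) = ∑_m I(m − s + ε) · x(m)`. -/
theorem ofdm_dfo_ici_kernel (M : ℕ) (hM : 1 ≤ M) (ε : ℝ) (hε : ¬ ∃ k : ℤ, ε = (k : ℝ))
    (x : Fin M → ℂ) (s : Fin M) :
    (∑ n : Fin M,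
        (((1 : ℂ) / (M : ℂ)) *
            ∑ m : Fin M,
              x m * Complex.exp (2 * (Real.pi : ℂ) * Complex.I * ((m : ℕ) : ℂ)
                * ((n : ℕ) : ℂ) / (M : ℂ)))
          * Complex.exp (2 * (Real.pi : ℂ) * Complex.I * ((n : ℕ) : ℂ) * (ε : ℂ) / (M : ℂ))
          * Complex.exp (-(2 * (Real.pi : ℂ) * Complex.I) * ((n : ℕ) : ℂ)
              * ((s : ℕ) : ℂ) / (M : ℂ)))
      = ∑ m : Fin M,
          (((Real.sin (Real.pi * (((m : ℕ) : ℝ) - ((s : ℕ) : ℝ) + ε)) /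
                ((M : ℝ) * Real.sin (Real.pi * (((m : ℕ) : ℝ) - ((s : ℕ) : ℝ) + ε) / (M : ℝ)))) : ℂ)
              * Complex.exp (Complex.I * (Real.pi : ℂ) * (1 - 1 / (M : ℂ))
                  * ((((m : ℕ) : ℝ) - ((s : ℕ) : ℝ) + ε : ℝ) : ℂ)))
            * x m := by
  have step : ∀ m : Fin M,
      ((1 : ℂ) / (M : ℂ)) * ∑ n : Fin M,
        (Complex.exp (2 * (Real.pi : ℂ) * Complex.I
          * (((((m : ℕ) : ℝ) - ((s : ℕ) : ℝ) + ε : ℝ)) : ℂ) / (M : ℂ)))^(n : ℕ)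
      = ((Real.sin (Real.pi * (((m : ℕ) : ℝ) - ((s : ℕ) : ℝ) + ε)) /
            ((M : ℝ) * Real.sin (Real.pi * (((m : ℕ) : ℝ) - ((s : ℕ) : ℝ) + ε) / (M : ℝ)))) : ℂ)
          * Complex.exp (Complex.I * (Real.pi : ℂ) * (1 - 1 / (M : ℂ))
              * ((((m : ℕ) : ℝ) - ((s : ℕ) : ℝ) + ε : ℝ) : ℂ)) := by
    intro m
    rw [Fin.sum_univ_eq_sum_range (fun n =>
      (Complex.exp (2 * (Real.pi : ℂ) * Complex.I
        * (((((m : ℕ) : ℝ) - ((s : ℕ) : ℝ) + ε : ℝ)) : ℂ) / (M : ℂ)))^n)]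
    exact key_sum M hM _ (by
      intro k hk
      apply hε
      refine ⟨k - (m : ℕ) + (s : ℕ), ?_⟩
      push_cast
      linarith)
  calc (∑ n : Fin M,
        (((1 : ℂ) / (M : ℂ)) *
            ∑ m : Fin M,
              x m * Complex.exp (2 * (Real.pi : ℂ) * Complex.I * ((m : ℕ) : ℂ)
                * ((n : ℕ) : ℂ) / (M : ℂ)))
          * Complex.exp (2 * (Real.pi : ℂ) * Complex.I * ((n : ℕ) : ℂ) * (ε : ℂ) / (M : ℂ))
          * Complex.exp (-(2 * (Real.pi : ℂ) * Complex.I) * ((n : ℕ) : ℂ)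
              * ((s : ℕ) : ℂ) / (M : ℂ)))
      = ∑ m : Fin M, (((1 : ℂ) / (M : ℂ)) * ∑ n : Fin M,
          (Complex.exp (2 * (Real.pi : ℂ) * Complex.I
            * (((((m : ℕ) : ℝ) - ((s : ℕ) : ℝ) + ε : ℝ)) : ℂ) / (M : ℂ)))^(n : ℕ)) * x m := by
        simp only [Finset.sum_mul, Finset.mul_sum]
        rw [Finset.sum_comm]
        refine Finset.sum_congr rfl fun m _ => Finset.sum_congr rfl fun n _ => ?_
        rw [← Complex.exp_nat_mul]
        have key : Complex.exp (2 * (Real.pi : ℂ) * Complex.I * ((m : ℕ) : ℂ)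
              * ((n : ℕ) : ℂ) / (M : ℂ))
            * Complex.exp (2 * (Real.pi : ℂ) * Complex.I * ((n : ℕ) : ℂ) * (ε : ℂ) / (M : ℂ))
            * Complex.exp (-(2 * (Real.pi : ℂ) * Complex.I) * ((n : ℕ) : ℂ)
              * ((s : ℕ) : ℂ) / (M : ℂ))
            = Complex.exp (((n : ℕ) : ℂ) * (2 * (Real.pi : ℂ) * Complex.I
              * (((((m : ℕ) : ℝ) - ((s : ℕ) : ℝ) + ε : ℝ)) : ℂ) / (M : ℂ))) := by
          rw [← Complex.exp_add, ← Complex.exp_add]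
          congr 1
          push_cast
          ring
        linear_combination (1 / (M : ℂ) * x m) * key
    _ = _ := by
        refine Finset.sum_congr rfl fun m _ => ?_
        rw [step m]
end

section
/- Let n ≥ 1, let M be an n × n complex Hermitian positive definite matrix, and let b ∈ ℂⁿ with Re(bᴴ(M⁻¹.mulVec b)) < 1. Then (i) M − b bᴴ is Hermitian positive definite; (ii) for every a ∈ ℂⁿ with a ≠ 0, one has Re(aᴴ(M.mulVec a)) − |aᴴb|² > 0 and |aᴴb|² / (Re(aᴴ(M.mulVec a)) − |aᴴb|²) ≤ Re(bᴴ((M − b bᴴ)⁻¹.mulVec b)); (iii) equality holds in (ii) for a = M⁻¹.mulVec b when b ≠ 0; and (iv) Re(bᴴ((M − b bᴴ)⁻¹.mulVec b)) = Re(bᴴ(M⁻¹.mulVec b)) / (1 − Re(bᴴ(M⁻¹.mulVec b))). -/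
open Matrix
open scoped ComplexOrder

noncomputable def herm {n : ℕ} (u v : Fin n → ℂ) : ℂ := ∑ i, star (u i) * v i

lemma herm_eq {n : ℕ} (u v : Fin n → ℂ) : herm u v = star u ⬝ᵥ v := by
  simp [herm, dotProduct]

lemma vecMulVec_mulVec' {n : ℕ} (u v x : Fin n → ℂ) :
    (vecMulVec u v).mulVec x = (v ⬝ᵥ x) • u := by
  funext i
  simp only [mulVec, dotProduct, vecMulVec_apply, Pi.smul_apply, smul_eq_mul]
  rw [Finset.sum_mul]
  exact Finset.sum_congr rfl fun j _ => by ring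

lemma herm_mulVec_symm {n : ℕ} {M : Matrix (Fin n) (Fin n) ℂ} (hM : M.IsHermitian)
    (u v : Fin n → ℂ) : star u ⬝ᵥ M.mulVec v = star (star v ⬝ᵥ M.mulVec u) := by
  rw [star_dotProduct, star_mulVec, ← dotProduct_mulVec, hM.eq]

lemma cs_aux {n : ℕ} {M : Matrix (Fin n) (Fin n) ℂ} (hM : M.PosDef) (b a : Fin n → ℂ) :
    ‖star a ⬝ᵥ b‖ ^ 2
      ≤ (star a ⬝ᵥ M.mulVec a).re * (star b ⬝ᵥ M⁻¹.mulVec b).re := by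
  have hdet : IsUnit M.det := hM.det_pos.ne'.isUnit
  set u : Fin n → ℂ := M⁻¹.mulVec b with hu
  have hMu : M.mulVec u = b := by
    rw [hu, mulVec_mulVec, Matrix.mul_nonsing_inv _ hdet, one_mulVec]
  set β : ℂ := star b ⬝ᵥ u with hβ
  have hβnn : 0 ≤ β := hM.inv.posSemidef.dotProduct_mulVec_nonneg b
  have hβre : β = ((β.re : ℝ) : ℂ) := by
    have := (Complex.le_def.mp hβnn).2
    exact Complex.ext rfl (by simpa using this.symm)
  set r : ℝ := β.re with hr
  have hr0 : 0 ≤ r := by simpa using (Complex.le_def.mp hβnn).1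
  set c : ℂ := star a ⬝ᵥ b with hc
  rcases eq_or_lt_of_le hr0 with h0 | hrpos
  · -- r = 0 forces b = 0
    have hb0 : b = 0 := by
      by_contra hb0
      have := hM.inv.dotProduct_mulVec_pos hb0
      have := (Complex.lt_def.mp this).1
      simp only [Complex.zero_re] at this
      linarith
    rw [hc, hb0]
    simp [← h0]
  · have hrne : (r:ℂ) ≠ 0 := by exact_mod_cast hrpos.ne'
    set t : ℂ := (starRingEnd ℂ) c / (r : ℂ) with ht
    set v : Fin n → ℂ := a - t • u with hv
    have h0 : 0 ≤ star v ⬝ᵥ M.mulVec v := hM.posSemidef.dotProduct_mulVec_nonneg v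
    have hub : star u ⬝ᵥ b = (r : ℂ) := by
      rw [star_dotProduct, ← hβ, ← hβre, hβre]
      simp
    have hua : star u ⬝ᵥ M.mulVec a = (starRingEnd ℂ) c := by
      rw [herm_mulVec_symm hM.isHermitian, hMu, ← hc]
      rfl
    have hexp : star v ⬝ᵥ M.mulVec v
        = star a ⬝ᵥ M.mulVec a - ((‖c‖ ^ 2 / r : ℝ) : ℂ) := by
      rw [hv]
      simp only [star_sub, star_smul, mulVec_sub, mulVec_smul, hMu,
        sub_dotProduct, dotProduct_sub, smul_dotProduct, dotProduct_smul,
        smul_eq_mul, hua, hub, ← hc]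
      rw [ht]
      have habs : ((‖c‖ ^ 2 : ℝ) : ℂ) = (starRingEnd ℂ) c * c := by
        rw [Complex.sq_norm, mul_comm, Complex.mul_conj]
      have hst : star ((starRingEnd ℂ) c / (r:ℂ)) = c / (r:ℂ) := by
        rw [Complex.star_def, map_div₀, Complex.conj_conj, Complex.conj_ofReal]
      rw [Complex.ofReal_div, habs, hst]
      field_simp
      ring
    rw [hexp] at h0
    have := (Complex.le_def.mp h0).1
    simp only [Complex.zero_re, Complex.sub_re, Complex.ofReal_re] at this
    have h2 : ‖c‖ ^ 2 / r ≤ (star a ⬝ᵥ M.mulVec a).re := by linarith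
    calc ‖c‖ ^ 2 = ‖c‖ ^ 2 / r * r := by field_simp
    _ ≤ (star a ⬝ᵥ M.mulVec a).re * r := by
        exact mul_le_mul_of_nonneg_right h2 hr0

lemma star_mul_self_eq' (z : ℂ) : star z * z = ((‖z‖ ^ 2 : ℝ) : ℂ) := by
  rw [Complex.star_def, mul_comm, Complex.mul_conj, Complex.sq_norm]

/-- **LSFD weight optimization.** For Hermitian positive definite `M` and
`b` with `Re(bᴴM⁻¹b) < 1`: (i) `M − b bᴴ` is positive definite; (ii) for every `a ≠ 0`
the effective SINR `|aᴴb|² / (Re(aᴴMa) − |aᴴb|²)` has positive denominator and is bounded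
by `Re(bᴴ(M − b bᴴ)⁻¹ b)`; (iii) equality holds at `a = M⁻¹ b` when `b ≠ 0`; and
(iv) `Re(bᴴ(M − b bᴴ)⁻¹ b) = Re(bᴴM⁻¹b) / (1 − Re(bᴴM⁻¹b))`. -/
theorem lsfd_weight_optimum (n : ℕ) (hn : 1 ≤ n)
    (M : Matrix (Fin n) (Fin n) ℂ) (hM : M.PosDef) (b : Fin n → ℂ)
    (hb : (herm b (M⁻¹.mulVec b)).re < 1) :
    (M - vecMulVec b (star b)).PosDef ∧
    (∀ a : Fin n → ℂ, a ≠ 0 →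
        0 < (herm a (M.mulVec a)).re - ‖herm a b‖ ^ 2 ∧
        ‖herm a b‖ ^ 2
            / ((herm a (M.mulVec a)).re - ‖herm a b‖ ^ 2)
          ≤ (herm b ((M - vecMulVec b (star b))⁻¹.mulVec b)).re) ∧
    (b ≠ 0 →
        ‖herm (M⁻¹.mulVec b) b‖ ^ 2
            / ((herm (M⁻¹.mulVec b) (M.mulVec (M⁻¹.mulVec b))).re
                - ‖herm (M⁻¹.mulVec b) b‖ ^ 2)
          = (herm b ((M - vecMulVec b (star b))⁻¹.mulVec b)).re) ∧
    ((herm b ((M - vecMulVec b (star b))⁻¹.mulVec b)).re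
        = (herm b (M⁻¹.mulVec b)).re / (1 - (herm b (M⁻¹.mulVec b)).re)) := by
  classical
  have hdet : IsUnit M.det := hM.det_pos.ne'.isUnit
  set u : Fin n → ℂ := M⁻¹.mulVec b with hu
  have hMu : M.mulVec u = b := by
    rw [hu, mulVec_mulVec, Matrix.mul_nonsing_inv _ hdet, one_mulVec]
  have hβnn : 0 ≤ star b ⬝ᵥ u := hM.inv.posSemidef.dotProduct_mulVec_nonneg b
  have hherm : herm b u = star b ⬝ᵥ u := herm_eq _ _
  set r : ℝ := (herm b u).re with hr
  have hβre : star b ⬝ᵥ u = (r : ℂ) := by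
    refine Complex.ext ?_ ?_
    · rw [hr, hherm, Complex.ofReal_re]
    · simpa using ((Complex.le_def.mp hβnn).2).symm
  have hr0 : 0 ≤ r := by
    have := (Complex.le_def.mp hβnn).1
    rw [hβre] at this
    simpa using this
  have hr1 : r < 1 := hb
  have h1r : (0:ℝ) < 1 - r := by linarith
  set N := M - vecMulVec b (star b) with hN
  have hquad : ∀ a : Fin n → ℂ, star a ⬝ᵥ N.mulVec a
      = star a ⬝ᵥ M.mulVec a - ((‖star a ⬝ᵥ b‖ ^ 2 : ℝ) : ℂ) := by
    intro a
    rw [hN, sub_mulVec, dotProduct_sub, vecMulVec_mulVec', dotProduct_smul, smul_eq_mul]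
    congr 1
    rw [star_dotProduct, star_mul_self_eq']
  have hNherm : N.IsHermitian := by
    have h2 : (vecMulVec b (star b)).IsHermitian := by
      ext i j
      simp [conjTranspose_apply, vecMulVec_apply, mul_comm]
    exact hM.isHermitian.sub h2
  have hcs : ∀ a : Fin n → ℂ,
      ‖star a ⬝ᵥ b‖ ^ 2 ≤ (star a ⬝ᵥ M.mulVec a).re * r := by
    intro a
    have h := cs_aux hM b a
    rwa [← hu, hβre, Complex.ofReal_re] at h
  have hden : ∀ a : Fin n → ℂ, a ≠ 0 →
      0 < (star a ⬝ᵥ M.mulVec a).re - ‖star a ⬝ᵥ b‖ ^ 2 := by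
    intro a ha
    have hq := hM.dotProduct_mulVec_pos ha
    have hqre : 0 < (star a ⬝ᵥ M.mulVec a).re := by
      have := (Complex.lt_def.mp hq).1
      simpa using this
    nlinarith [hcs a]
  have hNpd : N.PosDef := by
    refine PosDef.of_dotProduct_mulVec_pos hNherm (fun a ha => ?_)
    rw [hquad a, Complex.lt_def]
    have him : (star a ⬝ᵥ M.mulVec a).im = 0 := by
      have := (Complex.lt_def.mp (hM.dotProduct_mulVec_pos ha)).2
      simpa using this.symm
    constructor
    · simp only [Complex.zero_re, Complex.sub_re, Complex.ofReal_re]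
      exact hden a ha
    · simp only [Complex.zero_im, Complex.sub_im, Complex.ofReal_im, him, sub_zero]
  have hNdet : IsUnit N.det := hNpd.det_pos.ne'.isUnit
  have h1rne : (1 : ℂ) - (r:ℂ) ≠ 0 := by
    rw [show (1:ℂ) - (r:ℂ) = ((1 - r : ℝ) : ℂ) by push_cast; ring]
    exact_mod_cast h1r.ne'
  have hNy : N.mulVec (((1:ℂ) - r)⁻¹ • u) = b := by
    rw [mulVec_smul, hN, sub_mulVec, hMu, vecMulVec_mulVec', hβre]
    have h2 : b - (r:ℂ) • b = ((1:ℂ) - (r:ℂ)) • b := by rw [sub_smul, one_smul]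
    rw [h2, smul_smul, inv_mul_cancel₀ h1rne, one_smul]
  have hNinvb : N⁻¹.mulVec b = ((1:ℂ) - r)⁻¹ • u := by
    conv_lhs => rw [← hNy]
    rw [mulVec_mulVec, Matrix.nonsing_inv_mul _ hNdet, one_mulVec]
  have hRHS : (herm b (N⁻¹.mulVec b)).re = r / (1 - r) := by
    rw [herm_eq, hNinvb, dotProduct_smul, smul_eq_mul, hβre,
      show ((1:ℂ) - (r:ℂ))⁻¹ * (r:ℂ) = ((r / (1-r) : ℝ) : ℂ) by push_cast; ring,
      Complex.ofReal_re]
  refine ⟨hNpd, fun a ha => ?_, fun hb0 => ?_, by rw [hRHS, hr]⟩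
  · have hd := hden a ha
    rw [herm_eq, herm_eq]
    refine ⟨hd, ?_⟩
    rw [hRHS, div_le_div_iff₀ hd h1r]
    nlinarith [hcs a]
  · have hrpos : 0 < r := by
      have := (Complex.lt_def.mp (hM.inv.dotProduct_mulVec_pos hb0)).1
      rw [hβre] at this
      simpa using this
    have hub : herm u b = (r:ℂ) := by
      rw [herm_eq, star_dotProduct, hβre, Complex.star_def, Complex.conj_ofReal]
    rw [hMu, hub, hRHS, Complex.norm_real, Real.norm_eq_abs, abs_of_nonneg hr0, Complex.ofReal_re]
    rw [div_eq_div_iff (by nlinarith) (by linarith)]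
    ring
end

section
/- Let m₁ and m₂ be standard complex Gaussian vectors of dimension N on a probability space Ω whose 4N real coordinate variables are mutually independent. Let A, B be N × N complex matrices, set Q = A * Aᴴ and C = B * Bᴴ, and let h̄ ∈ ℂᴺ be deterministic. Define ĝ = h̄ + A.mulVec m₁ and h̃ = B.mulVec m₂. Then E[|ĝᴴh̃|²] = Re(tr(C * Q)) + Re(h̄ᴴ(C.mulVec h̄)). -/
open MeasureTheory ProbabilityTheory Matrix Real ComplexConjugate
open scoped NNReal ENNReal

lemma gaussHalf_pdf_eq : gaussianPDFReal 0 (1/2) = fun x => (Real.sqrt π)⁻¹ * Real.exp (-x^2) := by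
  funext x
  unfold gaussianPDFReal
  push_cast
  norm_num
  rw [mul_comm ((√π)⁻¹) ((√2)⁻¹), ← mul_assoc, mul_inv_cancel₀ (by positivity), one_mul]


lemma sq_exp_integrable : Integrable (fun x : ℝ => x ^ 2 * Real.exp (-x^2)) := by
  have := integrable_rpow_mul_exp_neg_mul_sq (b := 1) one_pos (s := 2) (by norm_num)
  simpa [Real.rpow_natCast, show ((2:ℕ):ℝ) = (2:ℝ) by norm_num] using this

lemma integral_sq_exp : ∫ x : ℝ, x ^ 2 * Real.exp (-x^2) = Real.sqrt π / 2 := by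
  have h2 : ∀ x : ℝ, x ^ (2:ℝ) = x ^ 2 := fun x => by
    rw [show (2:ℝ) = ((2:ℕ):ℝ) by norm_num, Real.rpow_natCast]
  have hIoi : ∫ x in Set.Ioi (0:ℝ), x ^ 2 * Real.exp (-x^2) = Real.sqrt π / 4 := by
    have := integral_rpow_mul_exp_neg_rpow (p := 2) (q := 2) (by norm_num) (by norm_num)
    simp_rw [h2] at this
    rw [this]
    rw [show (2 + 1 : ℝ)/2 = 1/2 + 1 by norm_num, Real.Gamma_add_one (by norm_num),
      Real.Gamma_one_half_eq]
    ring
  have hint := sq_exp_integrable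
  have hIic : ∫ x in Set.Iic (0:ℝ), x ^ 2 * Real.exp (-x^2) = Real.sqrt π / 4 := by
    have : ∫ x in Set.Iic (0:ℝ), x ^ 2 * Real.exp (-x^2)
        = ∫ x in Set.Iic (0:ℝ), (-x) ^ 2 * Real.exp (-(-x)^2) := by
      simp [neg_sq]
    rw [this, integral_comp_neg_Iic 0 (fun x => x ^ 2 * Real.exp (-x^2)), neg_zero, hIoi]
  rw [← intervalIntegral.integral_Iic_add_Ioi hint.integrableOn hint.integrableOn, hIic, hIoi]
  ring

lemma gaussHalf_pdf_meas : Measurable (fun x : ℝ => ((Real.sqrt π)⁻¹ * Real.exp (-x^2)).toNNReal) :=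
  ((Real.measurable_exp.comp (measurable_id.pow_const 2).neg).const_mul _).real_toNNReal

lemma gaussHalf_eq : gaussianReal 0 (1/2)
    = volume.withDensity (fun x => ((((Real.sqrt π)⁻¹ * Real.exp (-x^2)).toNNReal : ℝ≥0) : ℝ≥0∞)) := by
  rw [gaussianReal_of_var_ne_zero _ (by norm_num)]
  congr 1
  funext x
  rw [gaussianPDF_def, gaussHalf_pdf_eq]
  rfl

lemma integral_gaussHalf (f : ℝ → ℝ) :
    ∫ x, f x ∂(gaussianReal 0 (1/2)) = ∫ x, ((Real.sqrt π)⁻¹ * Real.exp (-x^2)) * f x := by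
  rw [gaussHalf_eq, integral_withDensity_eq_integral_smul gaussHalf_pdf_meas]
  congr 1
  funext x
  rw [NNReal.smul_def, Real.coe_toNNReal _ (by positivity)]
  rfl

lemma integrable_gaussHalf_iff (f : ℝ → ℝ) :
    Integrable f (gaussianReal 0 (1/2))
      ↔ Integrable (fun x => ((Real.sqrt π)⁻¹ * Real.exp (-x^2)) * f x) := by
  rw [gaussHalf_eq, integrable_withDensity_iff_integrable_smul gaussHalf_pdf_meas]
  constructor <;> intro h <;> refine h.congr (Filter.Eventually.of_forall fun x => ?_) <;>
    simp only [NNReal.smul_def, Real.coe_toNNReal _ (by positivity : (0:ℝ) ≤ (√π)⁻¹ * rexp (-x^2))] <;>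
    rfl

lemma gaussHalf_integrable_id : Integrable (fun x : ℝ => x) (gaussianReal 0 (1/2)) := by
  rw [integrable_gaussHalf_iff]
  have := (integrable_mul_exp_neg_mul_sq (b := 1) one_pos).const_mul ((Real.sqrt π)⁻¹)
  refine this.congr (Filter.Eventually.of_forall fun x => ?_)
  simp only [neg_mul, one_mul]
  ring

lemma gaussHalf_integral_id : ∫ x, x ∂(gaussianReal 0 (1/2)) = 0 := by
  rw [integral_gaussHalf]
  set f : ℝ → ℝ := fun x => ((Real.sqrt π)⁻¹ * Real.exp (-x^2)) * x with hf
  have hodd : ∀ x, f (-x) = - f x := fun x => by simp only [hf, neg_sq, neg_neg]; ring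
  have := integral_neg_eq_self f (volume : Measure ℝ)
  have h2 : ∫ x, f (-x) = - ∫ x, f x := by
    simp_rw [hodd]; exact integral_neg f
  linarith [this, h2]

lemma gaussHalf_integrable_sq : Integrable (fun x : ℝ => x * x) (gaussianReal 0 (1/2)) := by
  rw [integrable_gaussHalf_iff]
  have := sq_exp_integrable.const_mul ((Real.sqrt π)⁻¹)
  refine this.congr (Filter.Eventually.of_forall fun x => ?_)
  ring

lemma gaussHalf_integral_sq : ∫ x, x * x ∂(gaussianReal 0 (1/2)) = 1/2 := by
  rw [integral_gaussHalf]
  have h : ∀ x : ℝ, ((Real.sqrt π)⁻¹ * Real.exp (-x^2)) * (x * x)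
      = (Real.sqrt π)⁻¹ * (x^2 * Real.exp (-x^2)) := fun x => by ring
  simp_rw [h]
  rw [integral_const_mul, integral_sq_exp]
  field_simp


section helpers
variable {Ω : Type*} {mΩ : MeasurableSpace Ω} {μ : Measure Ω}

lemma integrable_cconj {f : Ω → ℂ} (hf : Integrable f μ) :
    Integrable (fun ω => conj (f ω)) μ := by
  have h : (fun ω => conj (f ω)) = fun ω => (((f ω).re : ℂ) - ((f ω).im : ℂ) * Complex.I) := by
    funext ω; apply Complex.ext <;> simp
  rw [h]
  have hre : Integrable (fun ω => (f ω).re) μ := by simpa using hf.re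
  have him : Integrable (fun ω => (f ω).im) μ := by simpa using hf.im
  exact (hre.ofReal).sub ((him.ofReal).mul_const Complex.I)

lemma integral_complex_re {f : Ω → ℂ} (hf : Integrable f μ) :
    ∫ ω, (f ω).re ∂μ = (∫ ω, f ω ∂μ).re := integral_re hf

lemma indep_integral_mul_complex {X Y : Ω → ℂ}
    (h : IndepFun X Y μ) (hX : Integrable X μ) (hY : Integrable Y μ) :
    ∫ ω, X ω * Y ω ∂μ = (∫ ω, X ω ∂μ) * ∫ ω, Y ω ∂μ := by
  have hXY : Integrable (fun ω => X ω * Y ω) μ := by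
    simpa [Pi.mul_def] using h.integrable_mul hX hY
  have hXr : Integrable (fun ω => (X ω).re) μ := by simpa using hX.re
  have hXi : Integrable (fun ω => (X ω).im) μ := by simpa using hX.im
  have hYr : Integrable (fun ω => (Y ω).re) μ := by simpa using hY.re
  have hYi : Integrable (fun ω => (Y ω).im) μ := by simpa using hY.im
  have irr : IndepFun (fun ω => (X ω).re) (fun ω => (Y ω).re) μ :=
    h.comp Complex.measurable_re Complex.measurable_re
  have iri : IndepFun (fun ω => (X ω).re) (fun ω => (Y ω).im) μ :=
    h.comp Complex.measurable_re Complex.measurable_im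
  have iir : IndepFun (fun ω => (X ω).im) (fun ω => (Y ω).re) μ :=
    h.comp Complex.measurable_im Complex.measurable_re
  have iii : IndepFun (fun ω => (X ω).im) (fun ω => (Y ω).im) μ :=
    h.comp Complex.measurable_im Complex.measurable_im
  have h1 : ∫ ω, (X ω).re * (Y ω).re ∂μ = (∫ ω, (X ω).re ∂μ) * ∫ ω, (Y ω).re ∂μ := by
    simpa [Pi.mul_def] using irr.integral_mul_eq_mul_integral hXr.1 hYr.1
  have h2 : ∫ ω, (X ω).re * (Y ω).im ∂μ = (∫ ω, (X ω).re ∂μ) * ∫ ω, (Y ω).im ∂μ := by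
    simpa [Pi.mul_def] using iri.integral_mul_eq_mul_integral hXr.1 hYi.1
  have h3 : ∫ ω, (X ω).im * (Y ω).re ∂μ = (∫ ω, (X ω).im ∂μ) * ∫ ω, (Y ω).re ∂μ := by
    simpa [Pi.mul_def] using iir.integral_mul_eq_mul_integral hXi.1 hYr.1
  have h4 : ∫ ω, (X ω).im * (Y ω).im ∂μ = (∫ ω, (X ω).im ∂μ) * ∫ ω, (Y ω).im ∂μ := by
    simpa [Pi.mul_def] using iii.integral_mul_eq_mul_integral hXi.1 hYi.1
  have hre : (∫ ω, X ω * Y ω ∂μ).re = ∫ ω, (X ω * Y ω).re ∂μ := by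
    simpa using (integral_re hXY).symm
  have him : (∫ ω, X ω * Y ω ∂μ).im = ∫ ω, (X ω * Y ω).im ∂μ := by
    simpa using (integral_im hXY).symm
  have hXre : (∫ ω, X ω ∂μ).re = ∫ ω, (X ω).re ∂μ := by simpa using (integral_re hX).symm
  have hXim : (∫ ω, X ω ∂μ).im = ∫ ω, (X ω).im ∂μ := by simpa using (integral_im hX).symm
  have hYre : (∫ ω, Y ω ∂μ).re = ∫ ω, (Y ω).re ∂μ := by simpa using (integral_re hY).symm
  have hYim : (∫ ω, Y ω ∂μ).im = ∫ ω, (Y ω).im ∂μ := by simpa using (integral_im hY).symm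
  apply Complex.ext
  · rw [hre]
    simp only [Complex.mul_re]
    rw [integral_sub (by simpa [Pi.mul_def] using irr.integrable_mul hXr hYr)
      (by simpa [Pi.mul_def] using iii.integrable_mul hXi hYi), h1, h4, hXre, hXim, hYre, hYim]
  · rw [him]
    simp only [Complex.mul_im]
    rw [integral_add (by simpa [Pi.mul_def] using iri.integrable_mul hXr hYi)
      (by simpa [Pi.mul_def] using iir.integrable_mul hXi hYr), h2, h3, hXre, hXim, hYre, hYim]

lemma iIndepFun_ae_congr {ι : Type*} {f g : ι → Ω → ℝ}
    (hf : iIndepFun f μ) (h : ∀ i, f i =ᵐ[μ] g i) :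
    iIndepFun g μ := by
  rw [iIndepFun_iff_measure_inter_preimage_eq_mul] at hf ⊢
  intro S sets hsets
  have hae : ∀ᵐ ω ∂μ, ∀ i ∈ S, f i ω = g i ω := by
    rw [Filter.eventually_all_finset]
    exact fun i _ => h i
  have h1 : ∀ i ∈ S, μ (g i ⁻¹' sets i) = μ (f i ⁻¹' sets i) := by
    intro i hi
    apply measure_congr
    rw [Filter.eventuallyEq_set]
    filter_upwards [h i] with ω hω
    simp [Set.mem_preimage, hω]
  have h2 : μ (⋂ i ∈ S, g i ⁻¹' sets i) = μ (⋂ i ∈ S, f i ⁻¹' sets i) := by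
    apply measure_congr
    rw [Filter.eventuallyEq_set]
    filter_upwards [hae] with ω hω
    simp only [Set.mem_iInter, Set.mem_preimage]
    exact ⟨fun h' i hi => by rw [hω i hi]; exact h' i hi, fun h' i hi => by rw [← hω i hi]; exact h' i hi⟩
  rw [h2, hf S hsets]
  exact (Finset.prod_congr rfl h1).symm

end helpers

theorem cross_moment_core {Ω : Type*} [MeasureSpace Ω]
    [IsProbabilityMeasure (volume : Measure Ω)] {N : ℕ}
    (Y : Bool × Fin N × Bool → Ω → ℝ)
    (hYmeas : ∀ q, Measurable (Y q))
    (hYind : iIndepFun Y volume)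
    (hYlaw : ∀ q, Measure.map (Y q) volume = gaussianReal 0 (1/2))
    (A B : Matrix (Fin N) (Fin N) ℂ) (hbar : Fin N → ℂ)
    (U V : Ω → Fin N → ℂ)
    (hU : ∀ ω k, U ω k = (Y (true,k,true) ω : ℂ) + (Y (true,k,false) ω : ℂ) * Complex.I)
    (hV : ∀ ω k, V ω k = (Y (false,k,true) ω : ℂ) + (Y (false,k,false) ω : ℂ) * Complex.I) :
    (∫ ω, ‖∑ i, star ((hbar + A.mulVec (U ω)) i) * B.mulVec (V ω) i‖ ^ 2)
      = (B * B.conjTranspose * (A * A.conjTranspose)).trace.re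
        + (∑ i, star (hbar i) * (B * B.conjTranspose).mulVec hbar i).re := by
  classical
  -- real coordinate facts
  have key : ∀ (q : Bool × Fin N × Bool) (f : ℝ → ℝ), Integrable f (gaussianReal 0 (1/2)) →
      Integrable (fun ω => f (Y q ω)) volume ∧
        ∫ ω, f (Y q ω) = ∫ x, f x ∂(gaussianReal 0 (1/2)) := by
    intro q f hf
    have hmap := hYlaw q
    constructor
    · rw [← hmap] at hf
      exact (integrable_map_measure hf.aestronglyMeasurable (hYmeas q).aemeasurable).mp hf
    · rw [← hmap] at hf ⊢
      exact (integral_map (hYmeas q).aemeasurable hf.aestronglyMeasurable).symm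
  have hInt1 : ∀ q, Integrable (Y q) volume := fun q =>
    (key q (fun x => x) gaussHalf_integrable_id).1
  have hMean : ∀ q, ∫ ω, Y q ω = 0 := fun q =>
    ((key q (fun x => x) gaussHalf_integrable_id).2).trans gaussHalf_integral_id
  have hmomi : ∀ q q', Integrable (fun ω => Y q ω * Y q' ω) volume := by
    intro q q'
    by_cases h : q = q'
    · subst h; exact (key q (fun x => x * x) gaussHalf_integrable_sq).1
    · have hi := hYind.indepFun h
      simpa [Pi.mul_def] using hi.integrable_mul (hInt1 q) (hInt1 q')
  have hmomv : ∀ q q', ∫ ω, Y q ω * Y q' ω = if q = q' then (1/2 : ℝ) else 0 := by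
    intro q q'
    by_cases h : q = q'
    · subst h; rw [if_pos rfl]
      exact ((key q (fun x => x * x) gaussHalf_integrable_sq).2).trans gaussHalf_integral_sq
    · rw [if_neg h]
      have hi := hYind.indepFun h
      have h0 : ∫ ω, Y q ω * Y q' ω = (∫ ω, Y q ω) * ∫ ω, Y q' ω := by
        simpa [Pi.mul_def] using hi.integral_mul_eq_mul_integral (hInt1 q).1 (hInt1 q').1
      rw [h0, hMean q, zero_mul]
  -- complex coordinates
  set W : Bool → Fin N → Ω → ℂ :=
    fun b k ω => (Y (b,k,true) ω : ℂ) + (Y (b,k,false) ω : ℂ) * Complex.I with hWdef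
  have F1 : ∀ b k, Integrable (W b k) volume := fun b k =>
    ((hInt1 (b,k,true)).ofReal).add (((hInt1 (b,k,false)).ofReal).mul_const Complex.I)
  have F2 : ∀ b k, ∫ ω, W b k ω = 0 := by
    intro b k
    have i1 : Integrable (fun ω => ((Y (b,k,true) ω : ℝ) : ℂ)) volume := (hInt1 _).ofReal
    have i2 : Integrable (fun ω => ((Y (b,k,false) ω : ℝ) : ℂ) * Complex.I) volume :=
      ((hInt1 _).ofReal).mul_const Complex.I
    simp only [hWdef]
    rw [integral_add i1 i2, integral_mul_const, integral_complex_ofReal, integral_complex_ofReal, hMean, hMean]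
    simp
  have hprod : ∀ (b : Bool) (k : Fin N) (b' : Bool) (l : Fin N) (ω : Ω),
      W b k ω * (starRingEnd ℂ) (W b' l ω)
        = ((Y (b,k,true) ω * Y (b',l,true) ω + Y (b,k,false) ω * Y (b',l,false) ω : ℝ) : ℂ)
          + ((Y (b,k,false) ω * Y (b',l,true) ω - Y (b,k,true) ω * Y (b',l,false) ω : ℝ) : ℂ)
            * Complex.I := by
    intro b k b' l ω
    rw [hWdef]
    simp only [map_add, _root_.map_mul, Complex.conj_ofReal, Complex.conj_I]
    push_cast
    ring_nf
    simp only [Complex.I_sq]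
    ring
  have F3 : ∀ b k b' l, Integrable (fun ω => W b k ω * (starRingEnd ℂ) (W b' l ω)) volume := by
    intro b k b' l
    refine Integrable.congr ?_ (Filter.Eventually.of_forall fun ω => (hprod b k b' l ω).symm)
    have i1 : Integrable (fun ω =>
        ((Y (b,k,true) ω * Y (b',l,true) ω + Y (b,k,false) ω * Y (b',l,false) ω : ℝ) : ℂ))
        volume := ((hmomi _ _).add (hmomi _ _)).ofReal
    have i2 : Integrable (fun ω =>
        ((Y (b,k,false) ω * Y (b',l,true) ω - Y (b,k,true) ω * Y (b',l,false) ω : ℝ) : ℂ)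
          * Complex.I) volume := (((hmomi _ _).sub (hmomi _ _)).ofReal).mul_const Complex.I
    exact i1.add i2
  have F4 : ∀ b k b' l, ∫ ω, W b k ω * (starRingEnd ℂ) (W b' l ω)
      = if b = b' ∧ k = l then 1 else 0 := by
    intro b k b' l
    simp_rw [hprod b k b' l]
    have i1 : Integrable (fun ω =>
        ((Y (b,k,true) ω * Y (b',l,true) ω + Y (b,k,false) ω * Y (b',l,false) ω : ℝ) : ℂ))
        volume := ((hmomi _ _).add (hmomi _ _)).ofReal
    have i2 : Integrable (fun ω =>
        ((Y (b,k,false) ω * Y (b',l,true) ω - Y (b,k,true) ω * Y (b',l,false) ω : ℝ) : ℂ)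
          * Complex.I) volume := (((hmomi _ _).sub (hmomi _ _)).ofReal).mul_const Complex.I
    rw [integral_add i1 i2, integral_mul_const,
      integral_complex_ofReal, integral_complex_ofReal,
      integral_add (hmomi _ _) (hmomi _ _), integral_sub (hmomi _ _) (hmomi _ _),
      hmomv, hmomv, hmomv, hmomv]
    by_cases hc : b = b' ∧ k = l
    · obtain ⟨rfl, rfl⟩ := hc
      simp only [if_pos rfl, and_self, Prod.mk.injEq, and_true, true_and]
      norm_num
    · have h1 : (b,k,true) ≠ (b',l,true) := by
        simp only [ne_eq, Prod.mk.injEq]; tauto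
      have h2 : (b,k,false) ≠ (b',l,false) := by
        simp only [ne_eq, Prod.mk.injEq]; tauto
      have h3 : (b,k,false) ≠ (b',l,true) := by
        simp only [ne_eq, Prod.mk.injEq]; tauto
      have h4 : (b,k,true) ≠ (b',l,false) := by
        simp only [ne_eq, Prod.mk.injEq]; tauto
      rw [if_neg h1, if_neg h2, if_neg h3, if_neg h4, if_neg hc]
      norm_num
  -- linear and quadratic forms
  have hLinI : ∀ (b : Bool) (c : Fin N → ℂ),
      Integrable (fun ω => ∑ k, c k * W b k ω) volume := fun b c =>
    integrable_finset_sum _ fun k _ => (F1 b k).const_mul _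
  have hLinV : ∀ (b : Bool) (c : Fin N → ℂ), ∫ ω, ∑ k, c k * W b k ω = 0 := by
    intro b c
    rw [integral_finset_sum _ fun k _ => (F1 b k).const_mul _]
    simp_rw [integral_const_mul, F2]
    simp
  have hexp : ∀ (b b' : Bool) (c d : Fin N → ℂ) (ω : Ω),
      (∑ k, c k * W b k ω) * (starRingEnd ℂ) (∑ l, d l * W b' l ω)
        = ∑ k, ∑ l, (c k * (starRingEnd ℂ) (d l)) * (W b k ω * (starRingEnd ℂ) (W b' l ω)) := by
    intro b b' c d ω
    rw [_root_.map_sum, Finset.sum_mul_sum]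
    refine Finset.sum_congr rfl fun k _ => Finset.sum_congr rfl fun l _ => ?_
    rw [_root_.map_mul]
    ring
  have hQuadI : ∀ (b b' : Bool) (c d : Fin N → ℂ),
      Integrable (fun ω => (∑ k, c k * W b k ω) * (starRingEnd ℂ) (∑ l, d l * W b' l ω))
        volume := by
    intro b b' c d
    refine Integrable.congr ?_ (Filter.Eventually.of_forall fun ω => (hexp b b' c d ω).symm)
    exact integrable_finset_sum _ fun k _ => integrable_finset_sum _ fun l _ =>
      (F3 b k b' l).const_mul _
  have hQuadV : ∀ (b b' : Bool) (c d : Fin N → ℂ),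
      ∫ ω, (∑ k, c k * W b k ω) * (starRingEnd ℂ) (∑ l, d l * W b' l ω)
        = if b = b' then ∑ k, c k * (starRingEnd ℂ) (d k) else 0 := by
    intro b b' c d
    simp_rw [hexp b b' c d]
    rw [integral_finset_sum _ fun k _ => integrable_finset_sum _ fun l _ =>
      (F3 b k b' l).const_mul _]
    have : ∀ k, ∫ ω, ∑ l, (c k * (starRingEnd ℂ) (d l)) * (W b k ω * (starRingEnd ℂ) (W b' l ω))
        = ∑ l, (c k * (starRingEnd ℂ) (d l)) * (if b = b' ∧ k = l then 1 else 0) := by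
      intro k
      rw [integral_finset_sum _ fun l _ => (F3 b k b' l).const_mul _]
      simp_rw [integral_const_mul, F4]
    simp_rw [this]
    by_cases hb : b = b'
    · simp [hb, mul_ite]
    · simp [hb]
  -- vector independence
  have hUV : IndepFun U V volume := by
    set S : Finset (Bool × Fin N × Bool) := Finset.univ.filter (fun q => q.1 = true) with hS
    set T : Finset (Bool × Fin N × Bool) := Finset.univ.filter (fun q => q.1 = false) with hT
    have hdisj : Disjoint S T := by
      rw [Finset.disjoint_left]
      intro q hq hq'
      simp [hS, hT] at hq hq'
      rw [hq] at hq'; exact Bool.noConfusion hq'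
    have hbig := hYind.indepFun_finset S T hdisj hYmeas
    have hmemS : ∀ (k : Fin N) (x : Bool), (true, k, x) ∈ S := by
      intro k x; simp [hS]
    have hmemT : ∀ (k : Fin N) (x : Bool), (false, k, x) ∈ T := by
      intro k x; simp [hT]
    set φ : ({x // x ∈ S} → ℝ) → (Fin N → ℂ) :=
      fun p k => (p ⟨(true,k,true), hmemS k true⟩ : ℂ)
        + (p ⟨(true,k,false), hmemS k false⟩ : ℂ) * Complex.I with hφ
    set ψ : ({x // x ∈ T} → ℝ) → (Fin N → ℂ) :=
      fun p k => (p ⟨(false,k,true), hmemT k true⟩ : ℂ)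
        + (p ⟨(false,k,false), hmemT k false⟩ : ℂ) * Complex.I with hψ
    have hφm : Measurable φ := by
      refine measurable_pi_lambda _ fun k => Measurable.add ?_ (Measurable.mul_const ?_ _)
      · exact Complex.measurable_ofReal.comp (measurable_pi_apply _)
      · exact Complex.measurable_ofReal.comp (measurable_pi_apply _)
    have hψm : Measurable ψ := by
      refine measurable_pi_lambda _ fun k => Measurable.add ?_ (Measurable.mul_const ?_ _)
      · exact Complex.measurable_ofReal.comp (measurable_pi_apply _)
      · exact Complex.measurable_ofReal.comp (measurable_pi_apply _)
    have hcomp := hbig.comp hφm hψm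
    refine hcomp.congr ?_ ?_ <;> refine Filter.Eventually.of_forall fun ω => funext fun k => ?_
    · rw [hU ω k]; rfl
    · rw [hV ω k]; rfl

  have hU' : ∀ ω k, U ω k = W true k ω := fun ω k => hU ω k
  have hV' : ∀ ω k, V ω k = W false k ω := fun ω k => hV ω k
  set Cm := B * B.conjTranspose with hCm
  set Qm := A * A.conjTranspose with hQm
  set Pg : Fin N → Ω → ℂ := fun i ω => ∑ k, A i k * W true k ω with hPg
  set Pw : Fin N → Ω → ℂ := fun i ω => ∑ k, B i k * W false k ω with hPw
  have hgExp : ∀ (i j : Fin N) (ω : Ω),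
      (starRingEnd ℂ) (hbar i + Pg i ω) * (hbar j + Pg j ω)
        = (starRingEnd ℂ) (hbar i) * hbar j
          + (starRingEnd ℂ) (hbar i) * Pg j ω
          + (starRingEnd ℂ) (Pg i ω) * hbar j
          + (starRingEnd ℂ) (Pg i ω * (starRingEnd ℂ) (Pg j ω)) := by
    intro i j ω
    simp only [map_add, _root_.map_mul, Complex.conj_conj]
    ring
  have hGfint : ∀ i j, Integrable
      (fun ω => (starRingEnd ℂ) (hbar i + Pg i ω) * (hbar j + Pg j ω)) volume := by
    intro i j
    refine Integrable.congr ?_ (Filter.Eventually.of_forall fun ω => (hgExp i j ω).symm)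
    exact (((integrable_const _).add ((hLinI true (fun k => A j k)).const_mul _)).add
      ((integrable_cconj (hLinI true fun k => A i k)).mul_const _)).add
      (integrable_cconj (hQuadI true true (fun k => A i k) (fun k => A j k)))
  have hGfval : ∀ i j, ∫ ω, (starRingEnd ℂ) (hbar i + Pg i ω) * (hbar j + Pg j ω)
      = (starRingEnd ℂ) (hbar i) * hbar j + Qm j i := by
    intro i j
    simp_rw [hgExp i j]
    have t2 : ∫ ω, (starRingEnd ℂ) (hbar i) * Pg j ω = 0 := by
      rw [integral_const_mul, show ∫ ω, Pg j ω = 0 from hLinV true fun k => A j k, mul_zero]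
    have t3 : ∫ ω, (starRingEnd ℂ) (Pg i ω) * hbar j = 0 := by
      rw [integral_mul_const, integral_conj,
        show ∫ ω, Pg i ω = 0 from hLinV true fun k => A i k, map_zero, zero_mul]
    have t4 : ∫ ω, (starRingEnd ℂ) (Pg i ω * (starRingEnd ℂ) (Pg j ω)) = Qm j i := by
      rw [integral_conj,
        show ∫ ω, Pg i ω * (starRingEnd ℂ) (Pg j ω)
            = ∑ k, A i k * (starRingEnd ℂ) (A j k) from
          (hQuadV true true (fun k => A i k) (fun k => A j k)).trans (if_pos rfl),
        _root_.map_sum, hQm, Matrix.mul_apply]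
      refine Finset.sum_congr rfl fun k _ => ?_
      rw [_root_.map_mul, Complex.conj_conj, Matrix.conjTranspose_apply]
      simp only [RCLike.star_def]
      ring
    have e1 : Integrable (fun _ : Ω => (starRingEnd ℂ) (hbar i) * hbar j) volume :=
      integrable_const _
    have e2 : Integrable (fun ω => (starRingEnd ℂ) (hbar i) * Pg j ω) volume :=
      (hLinI true (fun k => A j k)).const_mul _
    have e3 : Integrable (fun ω => (starRingEnd ℂ) (Pg i ω) * hbar j) volume :=
      (integrable_cconj (hLinI true fun k => A i k)).mul_const _
    have e4 : Integrable (fun ω => (starRingEnd ℂ) (Pg i ω * (starRingEnd ℂ) (Pg j ω)))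
        volume := integrable_cconj (hQuadI true true (fun k => A i k) (fun k => A j k))
    have e12 : Integrable (fun ω => (starRingEnd ℂ) (hbar i) * hbar j
        + (starRingEnd ℂ) (hbar i) * Pg j ω) volume := e1.add e2
    have e123 : Integrable (fun ω => (starRingEnd ℂ) (hbar i) * hbar j
        + (starRingEnd ℂ) (hbar i) * Pg j ω + (starRingEnd ℂ) (Pg i ω) * hbar j) volume :=
      e12.add e3
    rw [integral_add e123 e4, integral_add e12 e3, integral_add e1 e2,
      integral_const, t2, t3, t4]
    simp [measure_univ]
  have hWfint : ∀ i j, Integrable (fun ω => Pw i ω * (starRingEnd ℂ) (Pw j ω)) volume :=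
    fun i j => hQuadI false false (fun k => B i k) (fun k => B j k)
  have hWfval : ∀ i j, ∫ ω, Pw i ω * (starRingEnd ℂ) (Pw j ω) = Cm i j := by
    intro i j
    rw [show ∫ ω, Pw i ω * (starRingEnd ℂ) (Pw j ω)
          = ∑ k, B i k * (starRingEnd ℂ) (B j k) from
        (hQuadV false false (fun k => B i k) (fun k => B j k)).trans (if_pos rfl),
      hCm, Matrix.mul_apply]
    exact Finset.sum_congr rfl fun k _ => by
      rw [Matrix.conjTranspose_apply]
      simp only [RCLike.star_def]
  have hmv : ∀ (M : Matrix (Fin N) (Fin N) ℂ) (i : Fin N),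
      Measurable (fun u : Fin N → ℂ => ∑ k, M i k * u k) := fun M i =>
    Finset.measurable_sum _ fun k _ => (measurable_pi_apply k).const_mul _
  have hconjm : Measurable (starRingEnd ℂ) := RCLike.continuous_conj.measurable
  have hIndepGW : ∀ i j, IndepFun
      (fun ω => (starRingEnd ℂ) (hbar i + Pg i ω) * (hbar j + Pg j ω))
      (fun ω => Pw i ω * (starRingEnd ℂ) (Pw j ω)) volume := by
    intro i j
    have hφm : Measurable (fun u : Fin N → ℂ =>
        (starRingEnd ℂ) (hbar i + ∑ k, A i k * u k) * (hbar j + ∑ k, A j k * u k)) :=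
      (hconjm.comp (measurable_const.add (hmv A i))).mul (measurable_const.add (hmv A j))
    have hψm : Measurable (fun v : Fin N → ℂ =>
        (∑ k, B i k * v k) * (starRingEnd ℂ) (∑ k, B j k * v k)) :=
      (hmv B i).mul (hconjm.comp (hmv B j))
    have hcomp := hUV.comp hφm hψm
    refine hcomp.congr (Filter.Eventually.of_forall fun ω => ?_)
      (Filter.Eventually.of_forall fun ω => ?_)
    · show (starRingEnd ℂ) (hbar i + ∑ k, A i k * U ω k) * (hbar j + ∑ k, A j k * U ω k)
        = (starRingEnd ℂ) (hbar i + Pg i ω) * (hbar j + Pg j ω)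
      simp_rw [hU']
      rfl
    · show (∑ k, B i k * V ω k) * (starRingEnd ℂ) (∑ k, B j k * V ω k)
        = Pw i ω * (starRingEnd ℂ) (Pw j ω)
      simp_rw [hV']
      rfl
  have hterm : ∀ i j, ∫ ω,
      ((starRingEnd ℂ) (hbar i + Pg i ω) * (hbar j + Pg j ω))
        * (Pw i ω * (starRingEnd ℂ) (Pw j ω))
      = ((starRingEnd ℂ) (hbar i) * hbar j + Qm j i) * Cm i j := by
    intro i j
    rw [indep_integral_mul_complex (hIndepGW i j) (hGfint i j) (hWfint i j),
      hGfval, hWfval]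
  have hSexp : ∀ ω : Ω,
      (∑ i, (starRingEnd ℂ) ((hbar + A.mulVec (U ω)) i) * B.mulVec (V ω) i)
        * (starRingEnd ℂ) (∑ i, (starRingEnd ℂ) ((hbar + A.mulVec (U ω)) i) * B.mulVec (V ω) i)
      = ∑ i, ∑ j, ((starRingEnd ℂ) (hbar i + Pg i ω) * (hbar j + Pg j ω))
          * (Pw i ω * (starRingEnd ℂ) (Pw j ω)) := by
    intro ω
    have hg : ∀ i, (hbar + A.mulVec (U ω)) i = hbar i + Pg i ω := by
      intro i
      simp only [Pi.add_apply, Matrix.mulVec, dotProduct, hPg]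
      congr 1
      exact Finset.sum_congr rfl fun k _ => by rw [hU']
    have hw : ∀ i, B.mulVec (V ω) i = Pw i ω := by
      intro i
      simp only [Matrix.mulVec, dotProduct, hPw]
      exact Finset.sum_congr rfl fun k _ => by rw [hV']
    simp_rw [hg, hw]
    rw [_root_.map_sum, Finset.sum_mul_sum]
    refine Finset.sum_congr rfl fun i _ => Finset.sum_congr rfl fun j _ => ?_
    simp only [_root_.map_mul, Complex.conj_conj]
    ring
  have hprodint : ∀ i j, Integrable (fun ω =>
      ((starRingEnd ℂ) (hbar i + Pg i ω) * (hbar j + Pg j ω))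
        * (Pw i ω * (starRingEnd ℂ) (Pw j ω))) volume := fun i j => by
    simpa [Pi.mul_def] using (hIndepGW i j).integrable_mul (hGfint i j) (hWfint i j)
  have hSint : Integrable (fun ω =>
      (∑ i, (starRingEnd ℂ) ((hbar + A.mulVec (U ω)) i) * B.mulVec (V ω) i)
        * (starRingEnd ℂ)
          (∑ i, (starRingEnd ℂ) ((hbar + A.mulVec (U ω)) i) * B.mulVec (V ω) i)) volume := by
    refine Integrable.congr ?_ (Filter.Eventually.of_forall fun ω => (hSexp ω).symm)
    exact integrable_finset_sum _ fun i _ => integrable_finset_sum _ fun j _ => hprodint i j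
  have hSval : ∫ ω,
      (∑ i, (starRingEnd ℂ) ((hbar + A.mulVec (U ω)) i) * B.mulVec (V ω) i)
        * (starRingEnd ℂ)
          (∑ i, (starRingEnd ℂ) ((hbar + A.mulVec (U ω)) i) * B.mulVec (V ω) i)
      = ∑ i, ∑ j, ((starRingEnd ℂ) (hbar i) * hbar j + Qm j i) * Cm i j := by
    simp_rw [hSexp]
    rw [integral_finset_sum _ fun i _ => integrable_finset_sum _ fun j _ => hprodint i j]
    refine Finset.sum_congr rfl fun i _ => ?_
    rw [integral_finset_sum _ fun j _ => hprodint i j]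
    exact Finset.sum_congr rfl fun j _ => hterm i j
  have halg : ∑ i, ∑ j, ((starRingEnd ℂ) (hbar i) * hbar j + Qm j i) * Cm i j
      = (Cm * Qm).trace + ∑ i, (starRingEnd ℂ) (hbar i) * (Cm.mulVec hbar) i := by
    rw [Matrix.trace]
    simp only [Matrix.diag_apply, Matrix.mul_apply, Matrix.mulVec, dotProduct]
    rw [← Finset.sum_add_distrib]
    refine Finset.sum_congr rfl fun i _ => ?_
    rw [Finset.mul_sum, ← Finset.sum_add_distrib]
    refine Finset.sum_congr rfl fun j _ => ?_
    ring
  have habs : ∀ z : ℂ, ‖z‖^2 = (z * (starRingEnd ℂ) z).re := fun z => by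
    rw [Complex.mul_conj]
    simp [Complex.sq_norm]
  simp only [RCLike.star_def]
  calc ∫ ω, ‖∑ i, (starRingEnd ℂ) ((hbar + A.mulVec (U ω)) i)
        * B.mulVec (V ω) i‖ ^ 2
      = ∫ ω, ((∑ i, (starRingEnd ℂ) ((hbar + A.mulVec (U ω)) i) * B.mulVec (V ω) i)
          * (starRingEnd ℂ)
            (∑ i, (starRingEnd ℂ) ((hbar + A.mulVec (U ω)) i) * B.mulVec (V ω) i)).re := by
        simp_rw [habs]
    _ = ((∫ ω, (∑ i, (starRingEnd ℂ) ((hbar + A.mulVec (U ω)) i) * B.mulVec (V ω) i)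
          * (starRingEnd ℂ)
            (∑ i, (starRingEnd ℂ) ((hbar + A.mulVec (U ω)) i) * B.mulVec (V ω) i))).re := by
        exact integral_complex_re hSint
    _ = ((Cm * Qm).trace + ∑ i, (starRingEnd ℂ) (hbar i) * (Cm.mulVec hbar) i).re := by
        rw [hSval, halg]
    _ = (Cm * Qm).trace.re + (∑ i, (starRingEnd ℂ) (hbar i) * (Cm.mulVec hbar) i).re := by
        rw [Complex.add_re]

/-- A family of jointly standard complex Gaussian vectors of dimension `N`, indexed by `ι`:
all the real random variables `Re (m k · i)` and `Im (m k · i)`, for `k : ι` and `i : Fin N`,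
are mutually independent and each has law `gaussianReal 0 (1/2)`. In particular each `m k`
is a standard complex Gaussian vector, and distinct vectors are independent. -/
def IsStdComplexGaussianFam {Ω : Type*} [MeasureSpace Ω] {ι : Type*} (N : ℕ)
    (m : ι → Ω → Fin N → ℂ) : Prop :=
  iIndepFun
      (fun q : ι × Fin N × Bool => fun ω =>
        if q.2.2 then (m q.1 ω q.2.1).re else (m q.1 ω q.2.1).im) volume ∧
  ∀ q : ι × Fin N × Bool,
    Measure.map (fun ω => if q.2.2 then (m q.1 ω q.2.1).re else (m q.1 ω q.2.1).im) volume
      = gaussianReal 0 (1 / 2)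

/-- **estimation-error cross term, eq. (52) of the paper.** With MMSE channel
estimate `ĝ = h̄ + A m₁` (covariance `Q = A Aᴴ`) and independent estimation error
`h̃ = B m₂` (covariance `C = B Bᴴ`),
`E[|ĝᴴ h̃|²] = Re tr(C Q) + Re h̄ᴴCh̄`. -/
theorem estimation_error_cross_moment
    {Ω : Type*} [MeasureSpace Ω] [IsProbabilityMeasure (volume : Measure Ω)]
    (N : ℕ) (m₁ m₂ : Ω → Fin N → ℂ)
    (hm : IsStdComplexGaussianFam N (fun b : Bool => if b then m₁ else m₂))
    (A B : Matrix (Fin N) (Fin N) ℂ) (Q C : Matrix (Fin N) (Fin N) ℂ)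
    (hQ : Q = A * A.conjTranspose) (hC : C = B * B.conjTranspose)
    (hbar : Fin N → ℂ) :
    (∫ ω, ‖∑ i, star ((hbar + A.mulVec (m₁ ω)) i) * B.mulVec (m₂ ω) i‖ ^ 2)
      = (C * Q).trace.re + (∑ i, star (hbar i) * C.mulVec hbar i).re := by
  classical
  obtain ⟨hind, hlaw⟩ := hm
  set X : Bool × Fin N × Bool → Ω → ℝ := fun q ω =>
    if q.2.2 then ((if q.1 then m₁ else m₂) ω q.2.1).re
    else ((if q.1 then m₁ else m₂) ω q.2.1).im with hX
  have hindX : iIndepFun X volume := hind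
  have hlawX : ∀ q, Measure.map (X q) volume = gaussianReal 0 (1/2) := hlaw
  have haem : ∀ q, AEMeasurable (X q) volume := by
    intro q
    by_contra h
    have h2 : Measure.map (X q) volume = 0 := Measure.map_of_not_aemeasurable h
    have h3 := h2.symm.trans (hlawX q)
    have h4 : (0 : Measure ℝ) Set.univ = (gaussianReal 0 (1/2)) Set.univ := by rw [h3]
    simp [measure_univ] at h4
  set Y : Bool × Fin N × Bool → Ω → ℝ := fun q => (haem q).mk (X q) with hY
  have hYmeas : ∀ q, Measurable (Y q) := fun q => (haem q).measurable_mk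
  have haeq : ∀ q, X q =ᵐ[volume] Y q := fun q => (haem q).ae_eq_mk
  have hYind := iIndepFun_ae_congr hindX haeq
  have hYlaw : ∀ q, Measure.map (Y q) volume = gaussianReal 0 (1/2) := fun q =>
    (Measure.map_congr (haeq q)).symm.trans (hlawX q)
  have hcore := cross_moment_core Y hYmeas hYind hYlaw A B hbar
    (fun ω k => (Y (true,k,true) ω : ℂ) + (Y (true,k,false) ω : ℂ) * Complex.I)
    (fun ω k => (Y (false,k,true) ω : ℂ) + (Y (false,k,false) ω : ℂ) * Complex.I)
    (fun ω k => rfl) (fun ω k => rfl)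
  subst hQ
  subst hC
  rw [← hcore]
  apply integral_congr_ae
  have hall : ∀ᵐ ω ∂(volume : Measure Ω), ∀ q, X q ω = Y q ω := ae_all_iff.mpr haeq
  filter_upwards [hall] with ω hω
  have hm1 : m₁ ω = fun k =>
      (Y (true,k,true) ω : ℂ) + (Y (true,k,false) ω : ℂ) * Complex.I := by
    funext k
    have h1 := hω (true,k,true)
    have h2 := hω (true,k,false)
    simp only [hX, if_true] at h1 h2
    rw [← h1, ← h2]
    exact (Complex.re_add_im _).symm
  have hm2 : m₂ ω = fun k =>
      (Y (false,k,true) ω : ℂ) + (Y (false,k,false) ω : ℂ) * Complex.I := by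
    funext k
    have h1 := hω (false,k,true)
    have h2 := hω (false,k,false)
    simp only [hX, if_true, if_false] at h1 h2
    rw [← h1, ← h2]
    exact (Complex.re_add_im _).symm
  rw [hm1, hm2]
end
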